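/- Let λ > 0 and z⁰ ∈ (0,∞)^d with T^{(λ)}(z⁰) = (v⁰, h⁰). Then for every z ∈ (0,∞)^d with T^{(λ)}(z) = (v, h), one has ∑_{i=1}^d z⁰_i/z_i ≤ d if and only if h ≥ h⁰ + G(v⁰ − v). That is, T^{(λ)} maps the petal S⁻(z⁰) = {z ∈ (0,∞)^d : ∑ z⁰_i/z_i ≤ d} onto the up cone-like grain Π^↑((v⁰,h⁰)) := {(v,h) ∈ V × ℝ : h ≥ h⁰ + G(v⁰ − v)}. -/

import Mathlib

noncomputable section

/-- The hyperplane `V = {x ∈ ℝ^d : ∑ i, x i = 0}` as a submodule of Euclidean space. -/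
def Vsub (d : ℕ) : Submodule ℝ (EuclideanSpace ℝ (Fin d)) where
  carrier := {x | ∑ i, x i = 0}
  add_mem' := by
    intro a b ha hb
    simp only [Set.mem_setOf_eq] at ha hb ⊢
    simp [PiLp.add_apply, Finset.sum_add_distrib, ha, hb]
  zero_mem' := by
    simp only [Set.mem_setOf_eq]
    simp
  smul_mem' := by
    intro c x hx
    simp only [Set.mem_setOf_eq] at hx ⊢
    simp [PiLp.smul_apply, smul_eq_mul, ← Finset.mul_sum, hx]

/-- The function `G(v) = log((1/d) ∑ i, exp (v i))`. -/
def Gfun (d : ℕ) (v : EuclideanSpace ℝ (Fin d)) : ℝ :=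
  Real.log ((1 / (d : ℝ)) * ∑ i, Real.exp (v i))

/-- The scaling transform `T^{(λ)}(z) = (p_V (log z), (1/d)(log λ + ∑ i, log z i))`,
where `p_V` is the orthogonal projection onto the hyperplane `V`. -/
def Tmap (d : ℕ) (lam : ℝ) (z : EuclideanSpace ℝ (Fin d)) : Vsub d × ℝ :=
  ((Vsub d).orthogonalProjectionOnto (WithLp.toLp 2 (fun i => Real.log (z i)) : EuclideanSpace ℝ (Fin d)),
    (1 / (d : ℝ)) * (Real.log lam + ∑ i, Real.log (z i)))

/-- The inverse scaling transform `U^{(λ)}(v,h) = λ^{-1/d} e^h e^{l(v)}`. -/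
def Umap (d : ℕ) (lam : ℝ) (p : Vsub d × ℝ) : EuclideanSpace ℝ (Fin d) :=
  (WithLp.toLp 2 (fun i => lam ^ (-(1 : ℝ) / (d : ℝ)) * Real.exp p.2 *
    Real.exp ((p.1 : EuclideanSpace ℝ (Fin d)) i)) : EuclideanSpace ℝ (Fin d))

end

lemma proj_coord (d : ℕ) (hd : 0 < d) (x : EuclideanSpace ℝ (Fin d)) (i : Fin d) :
    (((Vsub d).orthogonalProjectionOnto x : EuclideanSpace ℝ (Fin d))) i
      = x i - (∑ j, x j) / d := by
  have hdne : (d : ℝ) ≠ 0 := Nat.cast_ne_zero.mpr hd.ne'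
  set v : EuclideanSpace ℝ (Fin d) := WithLp.toLp 2 (fun j => x j - (∑ j, x j) / d) with hv
  have key : (((Vsub d).orthogonalProjectionOnto x : EuclideanSpace ℝ (Fin d))) = v := by
    rw [Submodule.coe_orthogonalProjectionOnto_apply]
    apply Submodule.eq_starProjection_of_mem_of_inner_eq_zero
    · show ∑ j, v j = 0
      simp only [hv]
      rw [Finset.sum_sub_distrib, Finset.sum_const, Finset.card_univ, Fintype.card_fin,
        nsmul_eq_mul]
      field_simp
      ring
    · intro w hw
      have hw' : ∑ j, w j = 0 := hw
      rw [PiLp.inner_apply]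
      have h1 : ∀ j, (x - v) j = (∑ j, x j) / d := by
        intro j; simp [hv, PiLp.sub_apply]
      simp only [RCLike.inner_apply, conj_trivial, h1]
      rw [← Finset.sum_mul, hw', zero_mul]
  rw [key]

theorem statement11 (d : ℕ) (hd : 2 ≤ d) (lam : ℝ) (hlam : 0 < lam)
    (z0 : EuclideanSpace ℝ (Fin d)) (hz0 : ∀ i, 0 < z0 i)
    (z : EuclideanSpace ℝ (Fin d)) (hz : ∀ i, 0 < z i) :
    (∑ i, z0 i / z i ≤ (d : ℝ)) ↔
      (Tmap d lam z0).2 +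
        Gfun d (((Tmap d lam z0).1 : EuclideanSpace ℝ (Fin d)) -
          ((Tmap d lam z).1 : EuclideanSpace ℝ (Fin d))) ≤ (Tmap d lam z).2 := by
  have hd0 : 0 < d := lt_of_lt_of_le two_pos hd
  have hdne : (d : ℝ) ≠ 0 := Nat.cast_ne_zero.mpr hd0.ne'
  have hdpos : (0:ℝ) < d := Nat.cast_pos.mpr hd0
  set m0 : ℝ := (∑ j, Real.log (z0 j)) / d with hm0
  set m : ℝ := (∑ j, Real.log (z j)) / d with hm
  have hcoord : ∀ i, (((Tmap d lam z0).1 : EuclideanSpace ℝ (Fin d)) -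
      ((Tmap d lam z).1 : EuclideanSpace ℝ (Fin d))) i
      = (Real.log (z0 i) - Real.log (z i)) - (m0 - m) := by
    intro i
    rw [PiLp.sub_apply]
    show (((Vsub d).orthogonalProjectionOnto _ : EuclideanSpace ℝ (Fin d))) i -
      (((Vsub d).orthogonalProjectionOnto _ : EuclideanSpace ℝ (Fin d))) i = _
    rw [proj_coord d hd0, proj_coord d hd0]
    ring
  have hexp : ∀ i, Real.exp ((((Tmap d lam z0).1 : EuclideanSpace ℝ (Fin d)) -
      ((Tmap d lam z).1 : EuclideanSpace ℝ (Fin d))) i)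
      = (z0 i / z i) * Real.exp (m - m0) := by
    intro i
    have e : (Real.log (z0 i) - Real.log (z i)) - (m0 - m)
        = (Real.log (z0 i) - Real.log (z i)) + (m - m0) := by ring
    rw [hcoord i, e, Real.exp_add, Real.exp_sub, Real.exp_log (hz0 i), Real.exp_log (hz i)]
  haveI : Nonempty (Fin d) := ⟨⟨0, hd0⟩⟩
  have hsumpos : 0 < ∑ i, z0 i / z i :=
    Finset.sum_pos (fun i _ => div_pos (hz0 i) (hz i)) Finset.univ_nonempty
  have hargpos : (0:ℝ) < (1 / (d:ℝ)) * ∑ i, z0 i / z i :=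
    mul_pos (by positivity) hsumpos
  have hG : Gfun d (((Tmap d lam z0).1 : EuclideanSpace ℝ (Fin d)) -
      ((Tmap d lam z).1 : EuclideanSpace ℝ (Fin d)))
      = Real.log ((1 / (d:ℝ)) * ∑ i, z0 i / z i) + (m - m0) := by
    unfold Gfun
    simp_rw [hexp, ← Finset.sum_mul, ← mul_assoc]
    rw [Real.log_mul _ (Real.exp_ne_zero _), Real.log_exp]
    exact hargpos.ne'
  have hT0 : (Tmap d lam z0).2 = (1 / (d:ℝ)) * Real.log lam + m0 := by
    unfold Tmap; simp only; rw [hm0]; ring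
  have hT : (Tmap d lam z).2 = (1 / (d:ℝ)) * Real.log lam + m := by
    unfold Tmap; simp only; rw [hm]; ring
  rw [hG, hT0, hT]
  constructor
  · intro h
    have : Real.log ((1 / (d:ℝ)) * ∑ i, z0 i / z i) ≤ 0 := by
      apply Real.log_nonpos
      · exact hargpos.le
      · rw [div_mul_eq_mul_div, one_mul, div_le_one hdpos]; exact h
    linarith
  · intro h
    have hlog : Real.log ((1 / (d:ℝ)) * ∑ i, z0 i / z i) ≤ 0 := by linarith
    have := Real.exp_le_exp.mpr hlog
    rw [Real.exp_log hargpos, Real.exp_zero] at this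
    rw [div_mul_eq_mul_div, one_mul, div_le_one hdpos] at this
    exact this
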